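/- Suppose M > 0. For every vertex v ∈ V and every time t ≥ 0, the occupancy process started at x(0) and the deterministic process started at x(0) satisfy E|X_{N_v}(t) − x_{N_v}(t)| ≤ M^{−1}((M+1)^t − 1) · δ(G)^{−1/2}, where δ(G) = min_{v∈V} deg v is the minimum degree of G. -/

import Mathlib

open MeasureTheory Finset

noncomputable section

/-- Real value of a Boolean state. -/
def b2r (b : Bool) : ℝ := if b then 1 else 0

/-- Neighborhood average `y_{N_v} = (deg v)⁻¹ ∑_{w ∈ N_v} y_w`. -/
def nbrAvg {V : Type} [Fintype V] (G : SimpleGraph V) [DecidableRel G.Adj]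
    (y : V → ℝ) (v : V) : ℝ :=
  (∑ w ∈ G.neighborFinset v, y w) / (G.degree v : ℝ)

/-- `γ(a,b) = a(1 - f(b)) + (1 - a) g(b)`. -/
def gam (f g : ℝ → ℝ) (a b : ℝ) : ℝ := a * (1 - f b) + (1 - a) * g b

/-- One-step transition measure of the occupancy process: from state `X`, the
coordinates of the next state are independent Bernoulli with success
probability `γ(X_v, X_{N_v})`; this is the corresponding product measure on
`V → Bool`, written out by its mass function. -/
def stepMeasure {V : Type} [Fintype V] [DecidableEq V] (G : SimpleGraph V)
    [DecidableRel G.Adj] (f g : ℝ → ℝ) (X : V → Bool) : Measure (V → Bool) :=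
  ∑ y : V → Bool,
    ENNReal.ofReal (∏ v,
        (if y v then gam f g (b2r (X v)) (nbrAvg G (fun w => b2r (X w)) v)
         else 1 - gam f g (b2r (X v)) (nbrAvg G (fun w => b2r (X w)) v)))
      • Measure.dirac y

/-- Law of the occupancy process at time `t`, started (a.s.) at `x0`. -/
def law {V : Type} [Fintype V] [DecidableEq V] (G : SimpleGraph V)
    [DecidableRel G.Adj] (f g : ℝ → ℝ) (x0 : V → Bool) : ℕ → Measure (V → Bool)
  | 0 => Measure.dirac x0
  | t + 1 => (law G f g x0 t).bind (stepMeasure G f g)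

/-- The deterministic process `x(t+1)_v = γ(x(t)_v, x(t)_{N_v})`. -/
def det {V : Type} [Fintype V] (G : SimpleGraph V) [DecidableRel G.Adj]
    (f g : ℝ → ℝ) (x0 : V → ℝ) : ℕ → V → ℝ
  | 0 => x0
  | t + 1 => fun v => gam f g (det G f g x0 t v) (nbrAvg G (det G f g x0 t) v)

namespace ConcAux

lemma b2r_mem (b : Bool) : b2r b ∈ Set.Icc (0:ℝ) 1 := by cases b <;> simp [b2r]

variable {V : Type} [Fintype V] [DecidableEq V] (G : SimpleGraph V) [DecidableRel G.Adj]
  (f g : ℝ → ℝ)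

lemma nbrAvg_mem (hdeg : ∀ v : V, 0 < G.degree v) (y : V → ℝ)
    (hy : ∀ w, y w ∈ Set.Icc (0:ℝ) 1) (v : V) : nbrAvg G y v ∈ Set.Icc (0:ℝ) 1 := by
  have hd : (0:ℝ) < (G.degree v : ℝ) := by exact_mod_cast hdeg v
  constructor
  · exact div_nonneg (Finset.sum_nonneg fun w _ => (hy w).1) hd.le
  · rw [nbrAvg, div_le_one hd]
    calc ∑ w ∈ G.neighborFinset v, y w ≤ ∑ _w ∈ G.neighborFinset v, (1:ℝ) :=
          Finset.sum_le_sum fun w _ => (hy w).2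
      _ = (G.degree v : ℝ) := by rw [Finset.sum_const, nsmul_eq_mul, mul_one, SimpleGraph.degree]

lemma nbrAvg_sub (y z : V → ℝ) (v : V) :
    nbrAvg G y v - nbrAvg G z v
      = (∑ w ∈ G.neighborFinset v, (y w - z w)) / (G.degree v : ℝ) := by
  simp [nbrAvg, Finset.sum_sub_distrib, sub_div]

lemma gam_mem (hf01 : ∀ a ∈ Set.Icc (0:ℝ) 1, f a ∈ Set.Icc (0:ℝ) 1)
    (hg01 : ∀ a ∈ Set.Icc (0:ℝ) 1, g a ∈ Set.Icc (0:ℝ) 1)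
    {a b : ℝ} (ha : a ∈ Set.Icc (0:ℝ) 1) (hb : b ∈ Set.Icc (0:ℝ) 1) :
    gam f g a b ∈ Set.Icc (0:ℝ) 1 := by
  obtain ⟨hf1, hf2⟩ := hf01 b hb
  obtain ⟨hg1, hg2⟩ := hg01 b hb
  obtain ⟨ha1, ha2⟩ := ha
  constructor <;> simp only [gam] <;> nlinarith

/-- success probability of coordinate `v` in one step from `x`. -/
def pr (x : V → Bool) (v : V) : ℝ :=
  gam f g (b2r (x v)) (nbrAvg G (fun w => b2r (x w)) v)

def mass (x y : V → Bool) : ℝ :=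
  ∏ v, (if y v then pr G f g x v else 1 - pr G f g x v)

lemma stepMeasure_eq (x : V → Bool) :
    stepMeasure G f g x
      = ∑ y : V → Bool, ENNReal.ofReal (mass G f g x y) • Measure.dirac y := rfl

def P (x0 : V → Bool) : ℕ → (V → Bool) → ℝ
  | 0 => fun y => if y = x0 then 1 else 0
  | t + 1 => fun y => ∑ x, P x0 t x * mass G f g x y


variable (hdeg : ∀ v : V, 0 < G.degree v)
  (hf01 : ∀ a ∈ Set.Icc (0:ℝ) 1, f a ∈ Set.Icc (0:ℝ) 1)
  (hg01 : ∀ a ∈ Set.Icc (0:ℝ) 1, g a ∈ Set.Icc (0:ℝ) 1)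

include hdeg hf01 hg01 in
lemma pr_mem (x : V → Bool) (v : V) : pr G f g x v ∈ Set.Icc (0:ℝ) 1 :=
  gam_mem f g hf01 hg01 (b2r_mem (x v))
    (nbrAvg_mem G hdeg _ (fun w => b2r_mem (x w)) v)

include hdeg hf01 hg01 in
lemma mass_nonneg (x y : V → Bool) : 0 ≤ mass G f g x y := by
  refine Finset.prod_nonneg fun v _ => ?_
  obtain ⟨h1, h2⟩ := pr_mem G f g hdeg hf01 hg01 x v
  split <;> linarith

/-- expectation of a product over a subset of coordinates factorizes -/
lemma sum_mass_mul_prod (x : V → Bool) (S : Finset V) (F : V → Bool → ℝ) :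
    ∑ y : V → Bool, mass G f g x y * ∏ v ∈ S, F v (y v)
      = ∏ v ∈ S, (pr G f g x v * F v true + (1 - pr G f g x v) * F v false) := by
  have key : ∀ y : V → Bool, mass G f g x y * ∏ v ∈ S, F v (y v)
      = ∏ v : V, ((if y v then pr G f g x v else 1 - pr G f g x v) *
          (if v ∈ S then F v (y v) else 1)) := by
    intro y
    rw [Finset.prod_mul_distrib, mass]
    congr 1
    rw [Finset.prod_ite_mem, Finset.univ_inter]
  rw [Finset.sum_congr rfl fun y _ => key y]
  rw [← Fintype.piFinset_univ, ← Finset.prod_univ_sum (fun _ => (Finset.univ : Finset Bool))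
    (fun v b => (if b then pr G f g x v else 1 - pr G f g x v) * (if v ∈ S then F v b else 1))]
  rw [show ∏ v ∈ S, (pr G f g x v * F v true + (1 - pr G f g x v) * F v false)
      = ∏ v : V, (if v ∈ S then pr G f g x v * F v true + (1 - pr G f g x v) * F v false else 1) by
    rw [Finset.prod_ite_mem, Finset.univ_inter]]
  refine Finset.prod_congr rfl fun v _ => ?_
  rw [Fintype.sum_bool]
  by_cases hv : v ∈ S <;> simp [hv] <;> ring

include hdeg hf01 hg01 in
lemma sum_mass (x : V → Bool) : ∑ y : V → Bool, mass G f g x y = 1 := by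
  have := sum_mass_mul_prod G f g x (∅ : Finset V) (fun _ _ => 1)
  simpa using this

/-- second moment of a weighted fluctuation sum -/
lemma second_moment (x : V → Bool) (S : Finset V) (d : V → ℝ) :
    ∑ y : V → Bool, mass G f g x y * (∑ w ∈ S, d w * (b2r (y w) - pr G f g x w)) ^ 2
      = ∑ w ∈ S, (d w) ^ 2 * (pr G f g x w * (1 - pr G f g x w)) := by
  have expand : ∀ y : V → Bool,
      mass G f g x y * (∑ w ∈ S, d w * (b2r (y w) - pr G f g x w)) ^ 2
        = ∑ w ∈ S, ∑ w' ∈ S, mass G f g x y *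
            ((d w * (b2r (y w) - pr G f g x w)) * (d w' * (b2r (y w') - pr G f g x w'))) := by
    intro y
    rw [sq, Finset.sum_mul_sum, Finset.mul_sum]
    exact Finset.sum_congr rfl fun w _ => by rw [Finset.mul_sum]
  rw [Finset.sum_congr rfl fun y _ => expand y]
  rw [Finset.sum_comm]
  refine Finset.sum_congr rfl fun w hw => ?_
  rw [Finset.sum_comm]
  rw [Finset.sum_eq_single w (fun w' hw' hne => ?_) (fun h => absurd hw h)]
  · have := sum_mass_mul_prod G f g x {w} (fun v b => (d v * (b2r b - pr G f g x v)) ^ 2)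
    simp only [Finset.prod_singleton] at this
    calc ∑ y : V → Bool, mass G f g x y *
          ((d w * (b2r (y w) - pr G f g x w)) * (d w * (b2r (y w) - pr G f g x w)))
        = ∑ y : V → Bool, mass G f g x y * (d w * (b2r (y w) - pr G f g x w)) ^ 2 := by
          refine Finset.sum_congr rfl fun y _ => by ring
      _ = pr G f g x w * (d w * (b2r true - pr G f g x w)) ^ 2
            + (1 - pr G f g x w) * (d w * (b2r false - pr G f g x w)) ^ 2 := this
      _ = (d w) ^ 2 * (pr G f g x w * (1 - pr G f g x w)) := by
          rw [show b2r true = 1 from rfl, show b2r false = 0 from rfl]; ring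
  · have := sum_mass_mul_prod G f g x {w, w'} (fun v b => d v * (b2r b - pr G f g x v))
    simp only [Finset.prod_pair (Ne.symm hne)] at this
    rw [this, show b2r true = 1 from rfl, show b2r false = 0 from rfl]
    ring


include hdeg hf01 hg01 in
lemma P_nonneg (x0 : V → Bool) (t : ℕ) : ∀ y, 0 ≤ P G f g x0 t y := by
  induction t with
  | zero => intro y; simp only [P]; split <;> norm_num
  | succ t ih =>
    intro y
    exact Finset.sum_nonneg fun x _ =>
      mul_nonneg (ih x) (mass_nonneg G f g hdeg hf01 hg01 x y)

include hdeg hf01 hg01 in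
lemma sum_P (x0 : V → Bool) (t : ℕ) : ∑ y : V → Bool, P G f g x0 t y = 1 := by
  induction t with
  | zero => simp [P]
  | succ t ih =>
    simp only [P]
    rw [Finset.sum_comm]
    calc ∑ x : V → Bool, ∑ y : V → Bool, P G f g x0 t x * mass G f g x y
        = ∑ x : V → Bool, P G f g x0 t x * ∑ y : V → Bool, mass G f g x y :=
          Finset.sum_congr rfl fun x _ => (Finset.mul_sum _ _ _).symm
      _ = ∑ x : V → Bool, P G f g x0 t x := by
          refine Finset.sum_congr rfl fun x _ => ?_
          rw [sum_mass G f g hdeg hf01 hg01 x, mul_one]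
      _ = 1 := ih

include hdeg hf01 hg01 in
lemma law_eq (x0 : V → Bool) (t : ℕ) :
    law G f g x0 t
      = ∑ y : V → Bool, ENNReal.ofReal (P G f g x0 t y) • Measure.dirac y := by
  induction t with
  | zero =>
    show Measure.dirac x0 = _
    have h : ∀ y : V → Bool, ENNReal.ofReal (P G f g x0 0 y) • Measure.dirac y
        = if y = x0 then Measure.dirac x0 else 0 := by
      intro y
      simp only [P]
      by_cases h : y = x0
      · subst h; simp
      · simp [h]
    rw [Finset.sum_congr rfl fun y _ => h y, Finset.sum_ite_eq' Finset.univ x0]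
    simp
  | succ t ih =>
    show (law G f g x0 t).bind _ = _
    rw [ih]
    refine Measure.ext fun s hs => ?_
    rw [Measure.bind_apply hs (measurable_of_countable _).aemeasurable]
    rw [lintegral_finset_sum_measure]
    simp_rw [lintegral_smul_measure, lintegral_dirac, stepMeasure_eq]
    simp only [P, Measure.coe_finset_sum, Finset.sum_apply, Measure.smul_apply, smul_eq_mul]
    simp_rw [Finset.mul_sum]
    rw [Finset.sum_comm]
    refine Finset.sum_congr rfl fun y _ => ?_
    rw [ENNReal.ofReal_sum_of_nonneg (fun x _ =>
      mul_nonneg (P_nonneg G f g hdeg hf01 hg01 x0 t x) (mass_nonneg G f g hdeg hf01 hg01 x y)),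
      Finset.sum_mul]
    refine Finset.sum_congr rfl fun x _ => ?_
    rw [ENNReal.ofReal_mul (P_nonneg G f g hdeg hf01 hg01 x0 t x), mul_assoc]

include hdeg hf01 hg01 in
lemma integral_law (x0 : V → Bool) (t : ℕ) (h : (V → Bool) → ℝ) :
    ∫ y, h y ∂ law G f g x0 t = ∑ y : V → Bool, P G f g x0 t y * h y := by
  rw [law_eq G f g hdeg hf01 hg01 x0 t]
  rw [integral_finset_sum_measure
    (fun y _ => (Integrable.of_finite).smul_measure ENNReal.ofReal_ne_top)]
  refine Finset.sum_congr rfl fun y _ => ?_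
  rw [integral_smul_measure, integral_dirac,
    ENNReal.toReal_ofReal (P_nonneg G f g hdeg hf01 hg01 x0 t y), smul_eq_mul]

lemma exp_abs_le_sqrt {ι : Type} [Fintype ι] (q Z : ι → ℝ) (hq : ∀ i, 0 ≤ q i)
    (hq1 : ∑ i, q i = 1) :
    ∑ i, q i * |Z i| ≤ Real.sqrt (∑ i, q i * Z i ^ 2) := by
  have key := Finset.sum_mul_sq_le_sq_mul_sq Finset.univ
    (fun i => Real.sqrt (q i)) (fun i => Real.sqrt (q i) * |Z i|)
  have e1 : ∀ i : ι, Real.sqrt (q i) * (Real.sqrt (q i) * |Z i|) = q i * |Z i| := by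
    intro i; rw [← mul_assoc, Real.mul_self_sqrt (hq i)]
  have e2 : ∀ i : ι, (Real.sqrt (q i)) ^ 2 = q i := fun i => Real.sq_sqrt (hq i)
  have e3 : ∀ i : ι, (Real.sqrt (q i) * |Z i|) ^ 2 = q i * Z i ^ 2 := by
    intro i; rw [mul_pow, Real.sq_sqrt (hq i), sq_abs]
  simp_rw [e1, e2, e3, hq1, one_mul] at key
  have h0 : 0 ≤ ∑ i, q i * |Z i| :=
    Finset.sum_nonneg fun i _ => mul_nonneg (hq i) (abs_nonneg _)
  calc ∑ i, q i * |Z i| = Real.sqrt ((∑ i, q i * |Z i|) ^ 2) := (Real.sqrt_sq h0).symm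
    _ ≤ Real.sqrt (∑ i, q i * Z i ^ 2) := Real.sqrt_le_sqrt key


include hdeg hf01 hg01 in
lemma det_mem (x0 : V → Bool) (t : ℕ) :
    ∀ w, det G f g (fun u => b2r (x0 u)) t w ∈ Set.Icc (0:ℝ) 1 := by
  induction t with
  | zero => intro w; exact b2r_mem (x0 w)
  | succ t ih =>
    intro w
    exact gam_mem f g hf01 hg01 (ih w) (nbrAvg_mem G hdeg _ ih w)

lemma det_succ (x0 : V → ℝ) (t : ℕ) (w : V) :
    det G f g x0 (t+1) w
      = gam f g (det G f g x0 t w) (nbrAvg G (det G f g x0 t) w) := rfl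

include hdeg hf01 hg01 in
lemma main [Nonempty V] (M : ℝ) (hM : 0 < M)
    (hfLip : ∀ a ∈ Set.Icc (0:ℝ) 1, ∀ b ∈ Set.Icc (0:ℝ) 1, |f a - f b| ≤ M * |a - b|)
    (hgLip : ∀ a ∈ Set.Icc (0:ℝ) 1, ∀ b ∈ Set.Icc (0:ℝ) 1, |g a - g b| ≤ M * |a - b|)
    (x0 : V → Bool) (t : ℕ) :
    ∀ (c : V → ℝ), (∀ w, |c w| ≤ 1) → ∀ v : V,
    ∑ y : V → Bool, P G f g x0 t y *
        |(∑ w ∈ G.neighborFinset v,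
            c w * (b2r (y w) - det G f g (fun u => b2r (x0 u)) t w)) / (G.degree v : ℝ)|
      ≤ M⁻¹ * ((M + 1) ^ t - 1) *
        (Real.sqrt ((Finset.univ.inf' Finset.univ_nonempty fun w : V => G.degree w : ℕ) : ℝ))⁻¹ := by
  induction t with
  | zero =>
    intro c hc v
    have h0 : ∀ y : V → Bool, P G f g x0 0 y *
        |(∑ w ∈ G.neighborFinset v,
            c w * (b2r (y w) - det G f g (fun u => b2r (x0 u)) 0 w)) / (G.degree v : ℝ)| = 0 := by
      intro y
      by_cases h : y = x0
      · have hz : (∑ w ∈ G.neighborFinset v,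
            c w * (b2r (y w) - det G f g (fun u => b2r (x0 u)) 0 w)) = 0 := by
          refine Finset.sum_eq_zero fun w _ => ?_
          show c w * (b2r (y w) - b2r (x0 w)) = 0
          rw [h]; ring
        rw [hz]
        simp
      · simp [P, h]
    rw [Finset.sum_congr rfl fun y _ => h0 y]
    simp
  | succ t ih =>
    intro c hc v
    have hdet := det_mem G f g hdeg hf01 hg01 x0 t
    have hDpos : (0:ℝ) < ((Finset.univ.inf' Finset.univ_nonempty fun w : V => G.degree w : ℕ) : ℝ) := by
      have h : 0 < (Finset.univ.inf' Finset.univ_nonempty fun w : V => G.degree w) :=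
        (Finset.lt_inf'_iff _).mpr fun i _ => hdeg i
      exact_mod_cast h
    set D : ℝ := ((Finset.univ.inf' Finset.univ_nonempty fun w : V => G.degree w : ℕ) : ℝ) with hD
    have hDle : ∀ u : V, D ≤ (G.degree u : ℝ) := by
      intro u
      rw [hD]
      exact_mod_cast Finset.inf'_le _ (Finset.mem_univ u)
    have hs0 : (0:ℝ) ≤ (Real.sqrt D)⁻¹ := inv_nonneg.mpr (Real.sqrt_nonneg _)
    have hdegv : (0:ℝ) < (G.degree v : ℝ) := by exact_mod_cast hdeg v
    set xt : V → ℝ := det G f g (fun u => b2r (x0 u)) t with hxt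
    -- per-state one-step bound
    have perx : ∀ x : V → Bool,
        ∑ y : V → Bool, mass G f g x y *
            |(∑ w ∈ G.neighborFinset v,
                c w * (b2r (y w) - det G f g (fun u => b2r (x0 u)) (t+1) w)) / (G.degree v : ℝ)|
          ≤ (Real.sqrt D)⁻¹
            + |(∑ w ∈ G.neighborFinset v,
                (c w * (1 - f (nbrAvg G xt w) - g (nbrAvg G xt w))) * (b2r (x w) - xt w))
                / (G.degree v : ℝ)|
            + M * ((G.degree v : ℝ))⁻¹ * ∑ w ∈ G.neighborFinset v,
                |(∑ u ∈ G.neighborFinset w, (b2r (x u) - xt u)) / (G.degree w : ℝ)| := by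
      intro x
      have hpr := pr_mem G f g hdeg hf01 hg01 x
      have hm0 := mass_nonneg G f g hdeg hf01 hg01 x
      have hZ : ∀ y : V → Bool,
          (∑ w ∈ G.neighborFinset v,
              c w * (b2r (y w) - det G f g (fun u => b2r (x0 u)) (t+1) w)) / (G.degree v : ℝ)
          = (∑ w ∈ G.neighborFinset v, c w * (b2r (y w) - pr G f g x w)) / (G.degree v : ℝ)
            + ((∑ w ∈ G.neighborFinset v,
                  (c w * (1 - f (nbrAvg G xt w) - g (nbrAvg G xt w))) * (b2r (x w) - xt w))
                  / (G.degree v : ℝ)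
              + (∑ w ∈ G.neighborFinset v, c w *
                  (b2r (x w) * (f (nbrAvg G xt w) - f (nbrAvg G (fun u => b2r (x u)) w))
                    + (1 - b2r (x w)) *
                        (g (nbrAvg G (fun u => b2r (x u)) w) - g (nbrAvg G xt w))))
                  / (G.degree v : ℝ)) := by
        intro y
        rw [← add_div, ← add_div, ← Finset.sum_add_distrib,
          ← Finset.sum_add_distrib]
        refine congrArg (· / (G.degree v : ℝ)) (Finset.sum_congr rfl fun w _ => ?_)
        rw [det_succ, ← hxt]
        simp only [pr, gam]
        ring
      have stepA : ∑ y : V → Bool, mass G f g x y *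
          |(∑ w ∈ G.neighborFinset v, c w * (b2r (y w) - pr G f g x w)) / (G.degree v : ℝ)|
          ≤ (Real.sqrt D)⁻¹ := by
        have h1 := exp_abs_le_sqrt (mass G f g x)
          (fun y => (∑ w ∈ G.neighborFinset v, c w * (b2r (y w) - pr G f g x w))
            / (G.degree v : ℝ)) hm0 (sum_mass G f g hdeg hf01 hg01 x)
        refine h1.trans ?_
        rw [← Real.sqrt_inv]
        apply Real.sqrt_le_sqrt
        have e : ∑ y : V → Bool, mass G f g x y *
            ((∑ w ∈ G.neighborFinset v, c w * (b2r (y w) - pr G f g x w))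
              / (G.degree v : ℝ)) ^ 2
            = (∑ w ∈ G.neighborFinset v, (c w) ^ 2 * (pr G f g x w * (1 - pr G f g x w)))
              / ((G.degree v : ℝ)) ^ 2 := by
          rw [← second_moment G f g x (G.neighborFinset v) c, Finset.sum_div]
          refine Finset.sum_congr rfl fun y _ => ?_
          rw [div_pow, mul_div_assoc]
        rw [e]
        have hnum : ∑ w ∈ G.neighborFinset v, (c w) ^ 2 * (pr G f g x w * (1 - pr G f g x w))
            ≤ (G.degree v : ℝ) * (4:ℝ)⁻¹ := by
          calc ∑ w ∈ G.neighborFinset v, (c w) ^ 2 * (pr G f g x w * (1 - pr G f g x w))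
              ≤ ∑ _w ∈ G.neighborFinset v, (4:ℝ)⁻¹ := by
                refine Finset.sum_le_sum fun w _ => ?_
                obtain ⟨hc1, hc2⟩ := abs_le.mp (hc w)
                obtain ⟨hp1, hp2⟩ := hpr w
                nlinarith [sq_nonneg (pr G f g x w - 2⁻¹), sq_nonneg (c w)]
            _ = (G.degree v : ℝ) * (4:ℝ)⁻¹ := by
                rw [Finset.sum_const, nsmul_eq_mul, SimpleGraph.degree]
        have heq : (G.degree v : ℝ) * (4:ℝ)⁻¹ / ((G.degree v : ℝ)) ^ 2
            = ((4:ℝ) * (G.degree v : ℝ))⁻¹ := by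
          field_simp
        calc (∑ w ∈ G.neighborFinset v, (c w) ^ 2 * (pr G f g x w * (1 - pr G f g x w)))
              / ((G.degree v : ℝ)) ^ 2
            ≤ (G.degree v : ℝ) * (4:ℝ)⁻¹ / ((G.degree v : ℝ)) ^ 2 := by
              gcongr
          _ = ((4:ℝ) * (G.degree v : ℝ))⁻¹ := heq
          _ ≤ D⁻¹ := by
              apply inv_anti₀ hDpos
              linarith [hDle v, hdegv]
      have stepB2 : |(∑ w ∈ G.neighborFinset v, c w *
            (b2r (x w) * (f (nbrAvg G xt w) - f (nbrAvg G (fun u => b2r (x u)) w))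
              + (1 - b2r (x w)) * (g (nbrAvg G (fun u => b2r (x u)) w) - g (nbrAvg G xt w))))
          / (G.degree v : ℝ)|
          ≤ M * ((G.degree v : ℝ))⁻¹ * ∑ w ∈ G.neighborFinset v,
              |(∑ u ∈ G.neighborFinset w, (b2r (x u) - xt u)) / (G.degree w : ℝ)| := by
        rw [abs_div, abs_of_pos hdegv]
        have hrw : M * ((G.degree v : ℝ))⁻¹ * ∑ w ∈ G.neighborFinset v,
            |(∑ u ∈ G.neighborFinset w, (b2r (x u) - xt u)) / (G.degree w : ℝ)|
            = (M * ∑ w ∈ G.neighborFinset v,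
                |(∑ u ∈ G.neighborFinset w, (b2r (x u) - xt u)) / (G.degree w : ℝ)|)
              / (G.degree v : ℝ) := by
          rw [div_eq_mul_inv]; ring
        rw [hrw]
        gcongr
        calc |∑ w ∈ G.neighborFinset v, c w *
              (b2r (x w) * (f (nbrAvg G xt w) - f (nbrAvg G (fun u => b2r (x u)) w))
                + (1 - b2r (x w)) * (g (nbrAvg G (fun u => b2r (x u)) w) - g (nbrAvg G xt w)))|
            ≤ ∑ w ∈ G.neighborFinset v, |c w *
              (b2r (x w) * (f (nbrAvg G xt w) - f (nbrAvg G (fun u => b2r (x u)) w))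
                + (1 - b2r (x w)) *
                    (g (nbrAvg G (fun u => b2r (x u)) w) - g (nbrAvg G xt w)))| :=
              Finset.abs_sum_le_sum_abs _ _
          _ ≤ ∑ w ∈ G.neighborFinset v,
                M * |(∑ u ∈ G.neighborFinset w, (b2r (x u) - xt u)) / (G.degree w : ℝ)| := by
              refine Finset.sum_le_sum fun w _ => ?_
              have hb : nbrAvg G (fun u => b2r (x u)) w ∈ Set.Icc (0:ℝ) 1 :=
                nbrAvg_mem G hdeg _ (fun u => b2r_mem _) w
              have hb' : nbrAvg G xt w ∈ Set.Icc (0:ℝ) 1 := nbrAvg_mem G hdeg xt hdet w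
              have hsub : nbrAvg G (fun u => b2r (x u)) w - nbrAvg G xt w
                  = (∑ u ∈ G.neighborFinset w, (b2r (x u) - xt u)) / (G.degree w : ℝ) :=
                nbrAvg_sub G _ _ w
              have hrr : |b2r (x w) * (f (nbrAvg G xt w) - f (nbrAvg G (fun u => b2r (x u)) w))
                  + (1 - b2r (x w)) *
                      (g (nbrAvg G (fun u => b2r (x u)) w) - g (nbrAvg G xt w))|
                  ≤ M * |(∑ u ∈ G.neighborFinset w, (b2r (x u) - xt u)) / (G.degree w : ℝ)| := by
                rw [← hsub]
                cases hxw : x w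
                · rw [show b2r false = 0 from rfl]
                  norm_num
                  exact hgLip _ hb _ hb'
                · rw [show b2r true = 1 from rfl]
                  norm_num
                  have h5 := hfLip _ hb' _ hb
                  rwa [abs_sub_comm (nbrAvg G xt w)
                    (nbrAvg G (fun u => b2r (x u)) w)] at h5
              rw [abs_mul]
              exact le_trans
                (mul_le_mul (hc w) hrr (abs_nonneg _) zero_le_one)
                (le_of_eq (one_mul _))
          _ = M * ∑ w ∈ G.neighborFinset v,
                |(∑ u ∈ G.neighborFinset w, (b2r (x u) - xt u)) / (G.degree w : ℝ)| :=
              (Finset.mul_sum _ _ _).symm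
      calc ∑ y : V → Bool, mass G f g x y *
            |(∑ w ∈ G.neighborFinset v,
                c w * (b2r (y w) - det G f g (fun u => b2r (x0 u)) (t+1) w)) / (G.degree v : ℝ)|
          ≤ ∑ y : V → Bool, (mass G f g x y *
              |(∑ w ∈ G.neighborFinset v, c w * (b2r (y w) - pr G f g x w)) / (G.degree v : ℝ)|
            + mass G f g x y *
              |(∑ w ∈ G.neighborFinset v,
                  (c w * (1 - f (nbrAvg G xt w) - g (nbrAvg G xt w))) * (b2r (x w) - xt w))
                  / (G.degree v : ℝ)
                + (∑ w ∈ G.neighborFinset v, c w *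
                    (b2r (x w) * (f (nbrAvg G xt w) - f (nbrAvg G (fun u => b2r (x u)) w))
                      + (1 - b2r (x w)) *
                          (g (nbrAvg G (fun u => b2r (x u)) w) - g (nbrAvg G xt w))))
                    / (G.degree v : ℝ)|) := by
            refine Finset.sum_le_sum fun y _ => ?_
            rw [← mul_add, hZ y]
            exact mul_le_mul_of_nonneg_left (abs_add_le _ _) (hm0 y)
        _ = (∑ y : V → Bool, mass G f g x y *
              |(∑ w ∈ G.neighborFinset v, c w * (b2r (y w) - pr G f g x w)) / (G.degree v : ℝ)|)
            + (∑ y : V → Bool, mass G f g x y) *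
              |(∑ w ∈ G.neighborFinset v,
                  (c w * (1 - f (nbrAvg G xt w) - g (nbrAvg G xt w))) * (b2r (x w) - xt w))
                  / (G.degree v : ℝ)
                + (∑ w ∈ G.neighborFinset v, c w *
                    (b2r (x w) * (f (nbrAvg G xt w) - f (nbrAvg G (fun u => b2r (x u)) w))
                      + (1 - b2r (x w)) *
                          (g (nbrAvg G (fun u => b2r (x u)) w) - g (nbrAvg G xt w))))
                    / (G.degree v : ℝ)| := by
            rw [Finset.sum_add_distrib, ← Finset.sum_mul]
        _ ≤ (Real.sqrt D)⁻¹
            + (|(∑ w ∈ G.neighborFinset v,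
                  (c w * (1 - f (nbrAvg G xt w) - g (nbrAvg G xt w))) * (b2r (x w) - xt w))
                  / (G.degree v : ℝ)|
              + |(∑ w ∈ G.neighborFinset v, c w *
                    (b2r (x w) * (f (nbrAvg G xt w) - f (nbrAvg G (fun u => b2r (x u)) w))
                      + (1 - b2r (x w)) *
                          (g (nbrAvg G (fun u => b2r (x u)) w) - g (nbrAvg G xt w))))
                    / (G.degree v : ℝ)|) := by
            refine add_le_add stepA ?_
            rw [sum_mass G f g hdeg hf01 hg01 x, one_mul]
            exact abs_add_le _ _
        _ ≤ (Real.sqrt D)⁻¹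
            + |(∑ w ∈ G.neighborFinset v,
                (c w * (1 - f (nbrAvg G xt w) - g (nbrAvg G xt w))) * (b2r (x w) - xt w))
                / (G.degree v : ℝ)|
            + M * ((G.degree v : ℝ))⁻¹ * ∑ w ∈ G.neighborFinset v,
                |(∑ u ∈ G.neighborFinset w, (b2r (x u) - xt u)) / (G.degree w : ℝ)| := by
            rw [← add_assoc]
            exact add_le_add le_rfl stepB2
    -- assemble over the law at time t
    have hP0 := P_nonneg G f g hdeg hf01 hg01 x0 t
    have swap : ∑ y : V → Bool, P G f g x0 (t+1) y *
        |(∑ w ∈ G.neighborFinset v,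
            c w * (b2r (y w) - det G f g (fun u => b2r (x0 u)) (t+1) w)) / (G.degree v : ℝ)|
        = ∑ x : V → Bool, P G f g x0 t x * ∑ y : V → Bool, mass G f g x y *
            |(∑ w ∈ G.neighborFinset v,
              c w * (b2r (y w) - det G f g (fun u => b2r (x0 u)) (t+1) w)) / (G.degree v : ℝ)| := by
      simp only [P]
      simp_rw [Finset.sum_mul, mul_assoc, Finset.mul_sum]
      exact Finset.sum_comm
    rw [swap]
    have hct : ∀ w : V, ∑ x : V → Bool, P G f g x0 t x *
          |(∑ u ∈ G.neighborFinset w, (b2r (x u) - xt u)) / (G.degree w : ℝ)|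
        ≤ M⁻¹ * ((M + 1) ^ t - 1) * (Real.sqrt D)⁻¹ := by
      intro w
      have h := ih (fun _ => (1:ℝ)) (fun _ => by norm_num) w
      simpa using h
    have hB1 : ∑ x : V → Bool, P G f g x0 t x *
          |(∑ w ∈ G.neighborFinset v,
              (c w * (1 - f (nbrAvg G xt w) - g (nbrAvg G xt w))) * (b2r (x w) - xt w))
            / (G.degree v : ℝ)|
        ≤ M⁻¹ * ((M + 1) ^ t - 1) * (Real.sqrt D)⁻¹ := by
      refine ih (fun w => c w * (1 - f (nbrAvg G xt w) - g (nbrAvg G xt w))) (fun w => ?_) v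
      have hb' := nbrAvg_mem G hdeg xt hdet w
      obtain ⟨h1, h2⟩ := hf01 _ hb'
      obtain ⟨h3, h4⟩ := hg01 _ hb'
      rw [abs_mul]
      have hcc : |1 - f (nbrAvg G xt w) - g (nbrAvg G xt w)| ≤ 1 :=
        abs_le.mpr ⟨by linarith, by linarith⟩
      nlinarith [abs_nonneg (c w), hc w,
        abs_nonneg (1 - f (nbrAvg G xt w) - g (nbrAvg G xt w))]
    calc ∑ x : V → Bool, P G f g x0 t x * ∑ y : V → Bool, mass G f g x y *
            |(∑ w ∈ G.neighborFinset v,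
              c w * (b2r (y w) - det G f g (fun u => b2r (x0 u)) (t+1) w)) / (G.degree v : ℝ)|
        ≤ ∑ x : V → Bool, P G f g x0 t x *
            ((Real.sqrt D)⁻¹
              + |(∑ w ∈ G.neighborFinset v,
                  (c w * (1 - f (nbrAvg G xt w) - g (nbrAvg G xt w))) * (b2r (x w) - xt w))
                  / (G.degree v : ℝ)|
              + M * ((G.degree v : ℝ))⁻¹ * ∑ w ∈ G.neighborFinset v,
                  |(∑ u ∈ G.neighborFinset w, (b2r (x u) - xt u)) / (G.degree w : ℝ)|) :=
          Finset.sum_le_sum fun x _ => mul_le_mul_of_nonneg_left (perx x) (hP0 x)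
      _ = (∑ x : V → Bool, P G f g x0 t x * (Real.sqrt D)⁻¹)
          + (∑ x : V → Bool, P G f g x0 t x *
              |(∑ w ∈ G.neighborFinset v,
                  (c w * (1 - f (nbrAvg G xt w) - g (nbrAvg G xt w))) * (b2r (x w) - xt w))
                / (G.degree v : ℝ)|)
          + (∑ x : V → Bool, P G f g x0 t x *
              (M * ((G.degree v : ℝ))⁻¹ * ∑ w ∈ G.neighborFinset v,
                |(∑ u ∈ G.neighborFinset w, (b2r (x u) - xt u)) / (G.degree w : ℝ)|)) := by
          simp_rw [mul_add]
          rw [Finset.sum_add_distrib, Finset.sum_add_distrib]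
      _ ≤ (Real.sqrt D)⁻¹ + M⁻¹ * ((M + 1) ^ t - 1) * (Real.sqrt D)⁻¹
          + M * (M⁻¹ * ((M + 1) ^ t - 1) * (Real.sqrt D)⁻¹) := by
          refine add_le_add (add_le_add ?_ hB1) ?_
          · rw [← Finset.sum_mul, sum_P G f g hdeg hf01 hg01 x0 t, one_mul]
          · calc ∑ x : V → Bool, P G f g x0 t x *
                  (M * ((G.degree v : ℝ))⁻¹ * ∑ w ∈ G.neighborFinset v,
                    |(∑ u ∈ G.neighborFinset w, (b2r (x u) - xt u)) / (G.degree w : ℝ)|)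
                = M * ((G.degree v : ℝ))⁻¹ * ∑ w ∈ G.neighborFinset v,
                    (∑ x : V → Bool, P G f g x0 t x *
                      |(∑ u ∈ G.neighborFinset w, (b2r (x u) - xt u)) / (G.degree w : ℝ)|) := by
                  rw [Finset.mul_sum]
                  simp_rw [Finset.mul_sum]
                  rw [Finset.sum_comm]
                  refine Finset.sum_congr rfl fun x _ => Finset.sum_congr rfl fun w _ => by ring
              _ ≤ M * ((G.degree v : ℝ))⁻¹ * ∑ _w ∈ G.neighborFinset v,
                    (M⁻¹ * ((M + 1) ^ t - 1) * (Real.sqrt D)⁻¹) := by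
                  have hnn : (0:ℝ) ≤ M * ((G.degree v : ℝ))⁻¹ :=
                    mul_nonneg hM.le (inv_nonneg.mpr hdegv.le)
                  exact mul_le_mul_of_nonneg_left
                    (Finset.sum_le_sum fun w _ => hct w) hnn
              _ = M * (M⁻¹ * ((M + 1) ^ t - 1) * (Real.sqrt D)⁻¹) := by
                  rw [Finset.sum_const, nsmul_eq_mul, SimpleGraph.degree]
                  field_simp
                  have hn : ((G.neighborFinset v).card : ℝ) ≠ 0 := hdegv.ne'
                  exact mul_div_cancel_left₀ _ hn
      _ ≤ M⁻¹ * ((M + 1) ^ (t + 1) - 1) * (Real.sqrt D)⁻¹ := by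
          have hMne : M ≠ 0 := hM.ne'
          apply le_of_eq
          rw [pow_succ]
          field_simp
          ring

end ConcAux

/-- **Simplified concentration bound** in terms of the minimum degree `δ(G)`. -/
theorem concentration_min_degree
    {V : Type} [Fintype V] [DecidableEq V] [Nonempty V]
    (G : SimpleGraph V) [DecidableRel G.Adj]
    (hdeg : ∀ v : V, 0 < G.degree v)
    (f g : ℝ → ℝ) (M : ℝ) (hM : 0 < M)
    (hf01 : ∀ a ∈ Set.Icc (0:ℝ) 1, f a ∈ Set.Icc (0:ℝ) 1)
    (hg01 : ∀ a ∈ Set.Icc (0:ℝ) 1, g a ∈ Set.Icc (0:ℝ) 1)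
    (hfLip : ∀ a ∈ Set.Icc (0:ℝ) 1, ∀ b ∈ Set.Icc (0:ℝ) 1, |f a - f b| ≤ M * |a - b|)
    (hgLip : ∀ a ∈ Set.Icc (0:ℝ) 1, ∀ b ∈ Set.Icc (0:ℝ) 1, |g a - g b| ≤ M * |a - b|)
    (x0 : V → Bool) (v : V) (t : ℕ) :
    ∫ y, |nbrAvg G (fun w => b2r (y w)) v
          - nbrAvg G (det G f g (fun w => b2r (x0 w)) t) v| ∂ (law G f g x0 t)
      ≤ M⁻¹ * ((M + 1) ^ t - 1) *
          (Real.sqrt (Finset.univ.inf' Finset.univ_nonempty fun w : V => G.degree w))⁻¹ := by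
  rw [ConcAux.integral_law G f g hdeg hf01 hg01 x0 t
    (fun y => |nbrAvg G (fun w => b2r (y w)) v
      - nbrAvg G (det G f g (fun w => b2r (x0 w)) t) v|)]
  have h := ConcAux.main G f g hdeg hf01 hg01 M hM hfLip hgLip x0 t
    (fun _ => (1:ℝ)) (fun _ => by norm_num) v
  have e : ∀ y : V → Bool,
      |nbrAvg G (fun w => b2r (y w)) v - nbrAvg G (det G f g (fun w => b2r (x0 w)) t) v|
      = |(∑ w ∈ G.neighborFinset v,
          (b2r (y w) - det G f g (fun u => b2r (x0 u)) t w)) / (G.degree v : ℝ)| := by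
    intro y
    rw [ConcAux.nbrAvg_sub]
  rw [Finset.sum_congr rfl fun y _ => by rw [e y]]
  simpa using h


end
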